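/- Let M^0 = [[0, 1/8, 2, 5/6], [−8, −2, 0, −2], [−1/2, −1/8, 0, −1/8], [0, 1/2, 8, −2]] and M^1 = (i/√3) · [[0, 1, 0, 0], [0, 0, 0, 0], [0, 0, 0, 1], [0, 0, 0, 0]] be the 4×4 complex matrices defining the new exact scar state |Ω⟩ of the PXP chain in the spin-1/2 basis. Then for every n > 3 and every Rydberg-allowed cyclic word s : ZMod n → {0, 1}, Σ_{k ∈ ZMod n} Tr(F^{s_k} · M^{s_{k+1}} ⋯ M^{s_{k+n−1}}) = 0. (Hence |Ω⟩ is an exact E = 0 eigenstate of the periodic PXP chain of any length n > 3, even or odd.) -/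

import Mathlib

open Matrix

/-- The spin-1/2-basis MPS tensors of the new exact scar state `|Ω⟩`
of the PXP chain: `M^0` and `M^1 = (i/√3)·[...]`. -/
noncomputable def MOmega : Fin 2 → Matrix (Fin 4) (Fin 4) ℂ :=
  ![!![0, 1/8, 2, 5/6; -8, -2, 0, -2; -1/2, -1/8, 0, -1/8; 0, 1/2, 8, -2],
    (Complex.I / (Real.sqrt 3 : ℂ)) •
      !![0, 1, 0, 0; 0, 0, 0, 0; 0, 0, 0, 1; 0, 0, 0, 0]]

/-- The defect matrices: `F^0 = M^1`, `F^1 = M^0`. -/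
noncomputable def FOmega : Fin 2 → Matrix (Fin 4) (Fin 4) ℂ :=
  ![MOmega 1, MOmega 0]

/-! ### Auxiliary matrices and computational lemmas -/

section Aux

theorem Omega.mul_fin_four {α} [AddCommMonoid α] [Mul α]
    (a₁₁ a₁₂ a₁₃ a₁₄ a₂₁ a₂₂ a₂₃ a₂₄ a₃₁ a₃₂ a₃₃ a₃₄ a₄₁ a₄₂ a₄₃ a₄₄
     b₁₁ b₁₂ b₁₃ b₁₄ b₂₁ b₂₂ b₂₃ b₂₄ b₃₁ b₃₂ b₃₃ b₃₄ b₄₁ b₄₂ b₄₃ b₄₄ : α) :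
    !![a₁₁, a₁₂, a₁₃, a₁₄;
       a₂₁, a₂₂, a₂₃, a₂₄;
       a₃₁, a₃₂, a₃₃, a₃₄;
       a₄₁, a₄₂, a₄₃, a₄₄] * !![b₁₁, b₁₂, b₁₃, b₁₄;
                                 b₂₁, b₂₂, b₂₃, b₂₄;
                                 b₃₁, b₃₂, b₃₃, b₃₄;
                                 b₄₁, b₄₂, b₄₃, b₄₄] =
    !![a₁₁*b₁₁ + a₁₂*b₂₁ + a₁₃*b₃₁ + a₁₄*b₄₁, a₁₁*b₁₂ + a₁₂*b₂₂ + a₁₃*b₃₂ + a₁₄*b₄₂,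
       a₁₁*b₁₃ + a₁₂*b₂₃ + a₁₃*b₃₃ + a₁₄*b₄₃, a₁₁*b₁₄ + a₁₂*b₂₄ + a₁₃*b₃₄ + a₁₄*b₄₄;
       a₂₁*b₁₁ + a₂₂*b₂₁ + a₂₃*b₃₁ + a₂₄*b₄₁, a₂₁*b₁₂ + a₂₂*b₂₂ + a₂₃*b₃₂ + a₂₄*b₄₂,
       a₂₁*b₁₃ + a₂₂*b₂₃ + a₂₃*b₃₃ + a₂₄*b₄₃, a₂₁*b₁₄ + a₂₂*b₂₄ + a₂₃*b₃₄ + a₂₄*b₄₄;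
       a₃₁*b₁₁ + a₃₂*b₂₁ + a₃₃*b₃₁ + a₃₄*b₄₁, a₃₁*b₁₂ + a₃₂*b₂₂ + a₃₃*b₃₂ + a₃₄*b₄₂,
       a₃₁*b₁₃ + a₃₂*b₂₃ + a₃₃*b₃₃ + a₃₄*b₄₃, a₃₁*b₁₄ + a₃₂*b₂₄ + a₃₃*b₃₄ + a₃₄*b₄₄;
       a₄₁*b₁₁ + a₄₂*b₂₁ + a₄₃*b₃₁ + a₄₄*b₄₁, a₄₁*b₁₂ + a₄₂*b₂₂ + a₄₃*b₃₂ + a₄₄*b₄₂,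
       a₄₁*b₁₃ + a₄₂*b₂₃ + a₄₃*b₃₃ + a₄₄*b₄₃, a₄₁*b₁₄ + a₄₂*b₂₄ + a₄₃*b₃₄ + a₄₄*b₄₄] := by
  ext i j
  fin_cases i <;> fin_cases j
    <;> simp [Matrix.mul_apply, dotProduct, Fin.sum_univ_succ, ← add_assoc]

theorem Omega.sub_fin_four {α} [SubtractionMonoid α]
    (a₁₁ a₁₂ a₁₃ a₁₄ a₂₁ a₂₂ a₂₃ a₂₄ a₃₁ a₃₂ a₃₃ a₃₄ a₄₁ a₄₂ a₄₃ a₄₄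
     b₁₁ b₁₂ b₁₃ b₁₄ b₂₁ b₂₂ b₂₃ b₂₄ b₃₁ b₃₂ b₃₃ b₃₄ b₄₁ b₄₂ b₄₃ b₄₄ : α) :
    !![a₁₁, a₁₂, a₁₃, a₁₄; a₂₁, a₂₂, a₂₃, a₂₄; a₃₁, a₃₂, a₃₃, a₃₄; a₄₁, a₄₂, a₄₃, a₄₄]
    - !![b₁₁, b₁₂, b₁₃, b₁₄; b₂₁, b₂₂, b₂₃, b₂₄; b₃₁, b₃₂, b₃₃, b₃₄; b₄₁, b₄₂, b₄₃, b₄₄]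
    = !![a₁₁-b₁₁, a₁₂-b₁₂, a₁₃-b₁₃, a₁₄-b₁₄; a₂₁-b₂₁, a₂₂-b₂₂, a₂₃-b₂₃, a₂₄-b₂₄;
         a₃₁-b₃₁, a₃₂-b₃₂, a₃₃-b₃₃, a₃₄-b₃₄; a₄₁-b₄₁, a₄₂-b₄₂, a₄₃-b₄₃, a₄₄-b₄₄] := by
  ext i j
  fin_cases i <;> fin_cases j <;> simp

theorem Omega.smul_fin_four {α} [Mul α]
    (c : α) (a₁₁ a₁₂ a₁₃ a₁₄ a₂₁ a₂₂ a₂₃ a₂₄ a₃₁ a₃₂ a₃₃ a₃₄ a₄₁ a₄₂ a₄₃ a₄₄ : α) :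
    c • !![a₁₁, a₁₂, a₁₃, a₁₄; a₂₁, a₂₂, a₂₃, a₂₄; a₃₁, a₃₂, a₃₃, a₃₄; a₄₁, a₄₂, a₄₃, a₄₄]
    = !![c*a₁₁, c*a₁₂, c*a₁₃, c*a₁₄; c*a₂₁, c*a₂₂, c*a₂₃, c*a₂₄;
         c*a₃₁, c*a₃₂, c*a₃₃, c*a₃₄; c*a₄₁, c*a₄₂, c*a₄₃, c*a₄₄] := by
  ext i j
  fin_cases i <;> fin_cases j <;> simp

theorem Omega.zero_fin_four {α} [Zero α] :
    (!![0,0,0,0; 0,0,0,0; 0,0,0,0; 0,0,0,0] : Matrix (Fin 4) (Fin 4) α) = 0 := by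
  ext i j
  fin_cases i <;> fin_cases j <;> rfl

/-- `M^0` as an abbreviation. -/
noncomputable def M0m : Matrix (Fin 4) (Fin 4) ℂ :=
  !![0, 1/8, 2, 5/6; -8, -2, 0, -2; -1/2, -1/8, 0, -1/8; 0, 1/2, 8, -2]

/-- The rational part of `M^1`. -/
noncomputable def EOm : Matrix (Fin 4) (Fin 4) ℂ :=
  !![0,1,0,0; 0,0,0,0; 0,0,0,1; 0,0,0,0]

/-- The rational part of the gauge matrix `C`. -/
noncomputable def BOm : Matrix (Fin 4) (Fin 4) ℂ :=
  !![3/2, 17/32, -7/2, 7/16; -6, -3/2, 12, 1/2; 3/8, -3/64, 0, -5/32; -3, -9/8, 6, 0]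

/-- The scalar `i/√3`. -/
noncomputable def cOm : ℂ := Complex.I / (Real.sqrt 3 : ℂ)

/-- The gauge matrix `C = (i/√3)·B`. -/
noncomputable def COm : Matrix (Fin 4) (Fin 4) ℂ := cOm • BOm

theorem cOm_mul_cOm : cOm * cOm = -(1/3) := by
  have h3 : ((Real.sqrt 3 : ℝ) : ℂ) * ((Real.sqrt 3 : ℝ) : ℂ) = 3 := by
    norm_cast
    exact Real.mul_self_sqrt (by norm_num)
  have hne : ((Real.sqrt 3 : ℝ) : ℂ) ≠ 0 := by
    intro h
    rw [h, mul_zero] at h3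
    norm_num at h3
  rw [cOm, div_mul_div_comm, Complex.I_mul_I, h3]
  norm_num

theorem MOmega_zero : MOmega 0 = M0m := rfl
theorem MOmega_one : MOmega 1 = cOm • EOm := rfl
theorem FOmega_zero : FOmega 0 = cOm • EOm := rfl
theorem FOmega_one : FOmega 1 = M0m := rfl

theorem R1 : M0m * EOm * M0m = M0m * (BOm * M0m - M0m * BOm) * M0m := by
  norm_num [M0m, EOm, BOm, Omega.mul_fin_four, Omega.sub_fin_four]

theorem R2 : M0m * (BOm * M0m - M0m * BOm) * EOm = 0 := by
  have h : M0m * (BOm * M0m - M0m * BOm) * EOm = (!![0,0,0,0; 0,0,0,0; 0,0,0,0; 0,0,0,0] : Matrix (Fin 4) (Fin 4) ℂ) := by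
    norm_num [M0m, EOm, BOm, Omega.mul_fin_four, Omega.sub_fin_four] <;>
      (funext i; fin_cases i <;> funext j <;> fin_cases j <;> rfl)
  rw [h, Omega.zero_fin_four]

theorem R3 : EOm * (BOm * M0m - M0m * BOm) * M0m = 0 := by
  have h : EOm * (BOm * M0m - M0m * BOm) * M0m = (!![0,0,0,0; 0,0,0,0; 0,0,0,0; 0,0,0,0] : Matrix (Fin 4) (Fin 4) ℂ) := by
    norm_num [M0m, EOm, BOm, Omega.mul_fin_four, Omega.sub_fin_four] <;>
      (funext i; fin_cases i <;> rfl)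
  rw [h, Omega.zero_fin_four]

theorem R4 : EOm * (BOm * M0m - M0m * BOm) * EOm = 0 := by
  have h : EOm * (BOm * M0m - M0m * BOm) * EOm = (!![0,0,0,0; 0,0,0,0; 0,0,0,0; 0,0,0,0] : Matrix (Fin 4) (Fin 4) ℂ) := by
    norm_num [M0m, EOm, BOm, Omega.mul_fin_four, Omega.sub_fin_four] <;>
      (funext i; fin_cases i <;> rfl)
  rw [h, Omega.zero_fin_four]

theorem R5 : M0m * M0m * M0m = (-(1/3) : ℂ) • (M0m * (BOm * EOm - EOm * BOm) * M0m) := by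
  norm_num [M0m, EOm, BOm, Omega.mul_fin_four, Omega.sub_fin_four, Omega.smul_fin_four]

theorem RE : EOm * EOm = 0 := by
  have h : EOm * EOm = (!![0,0,0,0; 0,0,0,0; 0,0,0,0; 0,0,0,0] : Matrix (Fin 4) (Fin 4) ℂ) := by
    norm_num [EOm, Omega.mul_fin_four] <;>
      (funext i; fin_cases i <;> rfl)
  rw [h, Omega.zero_fin_four]

/-- The key local gauge ("sandwich") identity on Rydberg-allowed triples. -/
theorem Omega_sandwich (a b c : Fin 2)
    (hab : ¬ (a = 1 ∧ b = 1)) (hbc : ¬ (b = 1 ∧ c = 1)) :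
    MOmega a * FOmega b * MOmega c
      = MOmega a * (COm * MOmega b - MOmega b * COm) * MOmega c := by
  have hc := cOm_mul_cOm
  fin_cases a <;> fin_cases b <;> fin_cases c <;>
    simp only [Fin.mk_zero, Fin.mk_one, Fin.isValue] at hab hbc ⊢
  · -- (0,0,0)
    rw [MOmega_zero, FOmega_zero, COm]
    simp only [smul_mul_assoc, mul_smul_comm, ← smul_sub, smul_smul]
    rw [R1]
  · -- (0,0,1)
    rw [MOmega_zero, MOmega_one, FOmega_zero, COm]
    simp only [smul_mul_assoc, mul_smul_comm, ← smul_sub, smul_smul]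
    rw [mul_assoc M0m EOm EOm, RE, mul_zero, R2, smul_zero]
  · -- (0,1,0)
    rw [MOmega_zero, MOmega_one, FOmega_one, COm]
    simp only [smul_mul_assoc, mul_smul_comm, ← smul_sub, smul_smul]
    rw [hc, ← R5]
  · -- (0,1,1) disallowed
    exact absurd (by constructor <;> trivial) hbc
  · -- (1,0,0)
    rw [MOmega_zero, MOmega_one, FOmega_zero, COm]
    simp only [smul_mul_assoc, mul_smul_comm, ← smul_sub, smul_smul]
    rw [RE, zero_mul, R3, smul_zero]
  · -- (1,0,1)
    rw [MOmega_zero, MOmega_one, FOmega_zero, COm]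
    simp only [smul_mul_assoc, mul_smul_comm, ← smul_sub, smul_smul]
    rw [RE, zero_mul, R4, smul_zero]
  · -- (1,1,0) disallowed
    exact absurd (by constructor <;> trivial) hab
  · -- (1,1,1) disallowed
    exact absurd (by constructor <;> trivial) hab

/-- Abstract trace manipulation used for each site. -/
theorem Omega_trace_aux {d : ℕ} (F M C Mh Me P : Matrix (Fin d) (Fin d) ℂ)
    (h : Me * F * Mh = Me * (C * M - M * C) * Mh) :
    Matrix.trace (F * (Mh * (P * Me)))
      = Matrix.trace ((C * M - M * C) * (Mh * (P * Me))) := by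
  rw [show F * (Mh * (P * Me)) = F * Mh * P * Me by simp only [mul_assoc],
    Matrix.trace_mul_comm,
    show Me * (F * Mh * P) = Me * F * Mh * P by simp only [mul_assoc], h,
    show Me * (C * M - M * C) * Mh * P = Me * ((C * M - M * C) * Mh * P) by
      simp only [mul_assoc],
    Matrix.trace_mul_comm,
    show (C * M - M * C) * Mh * P * Me = (C * M - M * C) * (Mh * (P * Me)) by
      simp only [mul_assoc]]

end Aux

/-- for the `|Ω⟩` MPS tensors, the cyclic insertion sum vanishes
on every Rydberg-allowed cyclic word of length `n > 3` (even or odd), hence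
`|Ω⟩` is an exact `E = 0` eigenstate of the periodic PXP chain. -/
theorem Omega_cyclic_insertion_sum_eq_zero
    (n : ℕ) [NeZero n] (hn : 3 < n)
    (s : ZMod n → Fin 2)
    (hallow : ¬ ∃ k : ZMod n, s k = 1 ∧ s (k + 1) = 1) :
    ∑ k : ZMod n,
      Matrix.trace (FOmega (s k) *
        (List.ofFn fun j : Fin (n - 1) =>
          MOmega (s (k + 1 + ((j : ℕ) : ZMod n)))).prod) = 0 := by
  simp only [not_exists, not_and] at hallow
  obtain ⟨m, rfl⟩ : ∃ m, n = m + 4 := ⟨n - 4, by omega⟩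
  have hmod : ((m + 3 : ℕ) : ZMod (m + 4)) = -1 := by
    have h0 : ((m + 4 : ℕ) : ZMod (m + 4)) = 0 := ZMod.natCast_self (m + 4)
    push_cast at h0 ⊢
    linear_combination h0
  -- `M_{s k} * (L k).prod = Q k`
  have hPk1 : ∀ k : ZMod (m + 4),
      MOmega (s k) *
        (List.ofFn fun j : Fin (m + 4 - 1) =>
          MOmega (s (k + 1 + ((j : ℕ) : ZMod (m + 4))))).prod
      = (List.ofFn fun j : Fin (m + 4) =>
          MOmega (s (k + ((j : ℕ) : ZMod (m + 4))))).prod := by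
    intro k
    have h1 : (List.ofFn fun j : Fin (m + 3 + 1) => MOmega (s (k + ((j : ℕ) : ZMod (m + 4)))))
        = MOmega (s (k + (((0 : Fin (m + 3 + 1)) : ℕ) : ZMod (m + 4))) ) ::
          (List.ofFn fun i : Fin (m + 3) =>
            MOmega (s (k + (((i.succ : Fin (m + 3 + 1)) : ℕ) : ZMod (m + 4))))) :=
      List.ofFn_succ
    have h2 : (fun i : Fin (m + 3) =>
          MOmega (s (k + (((i.succ : Fin (m + 3 + 1)) : ℕ) : ZMod (m + 4)))))
        = fun j : Fin (m + 3) => MOmega (s (k + 1 + ((j : ℕ) : ZMod (m + 4)))) := by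
      funext i
      congr 2
      try push_cast [Fin.val_succ]
      try ring
    have h3 : k + (((0 : Fin (m + 3 + 1)) : ℕ) : ZMod (m + 4)) = k := by
      simp
    rw [h2, h3] at h1
    show MOmega (s k) * (List.ofFn fun j : Fin (m + 3) =>
        MOmega (s (k + 1 + ((j : ℕ) : ZMod (m + 4))))).prod = _
    rw [show (List.ofFn fun j : Fin (m + 4) => MOmega (s (k + ((j : ℕ) : ZMod (m + 4)))))
      = (List.ofFn fun j : Fin (m + 3 + 1) => MOmega (s (k + ((j : ℕ) : ZMod (m + 4))))) from rfl,
      h1, List.prod_cons]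
  -- `(L k).prod * M_{s k} = Q (k+1)`
  have hPk2 : ∀ k : ZMod (m + 4),
      (List.ofFn fun j : Fin (m + 4 - 1) =>
          MOmega (s (k + 1 + ((j : ℕ) : ZMod (m + 4))))).prod * MOmega (s k)
      = (List.ofFn fun j : Fin (m + 4) =>
          MOmega (s (k + 1 + ((j : ℕ) : ZMod (m + 4))))).prod := by
    intro k
    have h1 : (List.ofFn fun j : Fin (m + 3 + 1) =>
          MOmega (s (k + 1 + ((j : ℕ) : ZMod (m + 4)))))
        = (List.ofFn fun i : Fin (m + 3) =>
            MOmega (s (k + 1 + (((i.castSucc : Fin (m + 3 + 1)) : ℕ) : ZMod (m + 4))))).concat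
          (MOmega (s (k + 1 + (((Fin.last (m + 3) : Fin (m + 3 + 1)) : ℕ) : ZMod (m + 4))))) :=
      List.ofFn_succ' _
    have h2 : (fun i : Fin (m + 3) =>
          MOmega (s (k + 1 + (((i.castSucc : Fin (m + 3 + 1)) : ℕ) : ZMod (m + 4)))))
        = fun j : Fin (m + 3) => MOmega (s (k + 1 + ((j : ℕ) : ZMod (m + 4)))) := by
      funext i
      congr 2
      try push_cast [Fin.coe_castSucc]
      try ring
    have h3 : k + 1 + (((Fin.last (m + 3) : Fin (m + 3 + 1)) : ℕ) : ZMod (m + 4)) = k := by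
      rw [Fin.val_last, hmod]
      ring
    rw [h2, h3] at h1
    show (List.ofFn fun j : Fin (m + 3) =>
        MOmega (s (k + 1 + ((j : ℕ) : ZMod (m + 4))))).prod * MOmega (s k) = _
    rw [show (List.ofFn fun j : Fin (m + 4) => MOmega (s (k + 1 + ((j : ℕ) : ZMod (m + 4)))))
      = (List.ofFn fun j : Fin (m + 3 + 1) =>
          MOmega (s (k + 1 + ((j : ℕ) : ZMod (m + 4))))) from rfl,
      h1, List.prod_concat]
  -- split off the first and last entries of `L k`
  have hsplit : ∀ k : ZMod (m + 4),
      (List.ofFn fun j : Fin (m + 4 - 1) =>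
          MOmega (s (k + 1 + ((j : ℕ) : ZMod (m + 4)))))
      = MOmega (s (k + 1)) ::
        ((List.ofFn fun i : Fin (m + 1) =>
            MOmega (s (k + 2 + ((i : ℕ) : ZMod (m + 4))))).concat
          (MOmega (s (k - 1)))) := by
    intro k
    have h1 : (List.ofFn fun j : Fin (m + 2 + 1) =>
          MOmega (s (k + 1 + ((j : ℕ) : ZMod (m + 4)))))
        = MOmega (s (k + 1 + (((0 : Fin (m + 2 + 1)) : ℕ) : ZMod (m + 4)))) ::
          (List.ofFn fun i : Fin (m + 2) =>
            MOmega (s (k + 1 + (((i.succ : Fin (m + 2 + 1)) : ℕ) : ZMod (m + 4))))) :=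
      List.ofFn_succ
    have h2 : (List.ofFn fun i : Fin (m + 1 + 1) =>
          MOmega (s (k + 1 + (((i.succ : Fin (m + 2 + 1)) : ℕ) : ZMod (m + 4)))))
        = (List.ofFn fun i : Fin (m + 1) =>
            MOmega (s (k + 1 +
              ((((i.castSucc : Fin (m + 1 + 1)).succ : Fin (m + 2 + 1)) : ℕ) : ZMod (m + 4))))).concat
          (MOmega (s (k + 1 +
            ((((Fin.last (m + 1) : Fin (m + 1 + 1)).succ : Fin (m + 2 + 1)) : ℕ) : ZMod (m + 4))))) :=
      List.ofFn_succ' _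
    have h3 : (fun i : Fin (m + 1) =>
          MOmega (s (k + 1 +
            ((((i.castSucc : Fin (m + 1 + 1)).succ : Fin (m + 2 + 1)) : ℕ) : ZMod (m + 4)))))
        = fun i : Fin (m + 1) => MOmega (s (k + 2 + ((i : ℕ) : ZMod (m + 4)))) := by
      funext i
      congr 2
      try push_cast [Fin.val_succ, Fin.coe_castSucc]
      try ring
    have h4 : k + 1 +
        ((((Fin.last (m + 1) : Fin (m + 1 + 1)).succ : Fin (m + 2 + 1)) : ℕ) : ZMod (m + 4))
        = k - 1 := by
      rw [Fin.val_succ, Fin.val_last]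
      have hm' : ((m : ZMod (m + 4)) + 3) = -1 := by push_cast at hmod; linear_combination hmod
      push_cast
      linear_combination hm'
    have h5 : k + 1 + (((0 : Fin (m + 2 + 1)) : ℕ) : ZMod (m + 4)) = k + 1 := by
      simp
    rw [h3, h4] at h2
    rw [h5] at h1
    show (List.ofFn fun j : Fin (m + 2 + 1) =>
        MOmega (s (k + 1 + ((j : ℕ) : ZMod (m + 4))))) = _
    rw [h1, h2]
  -- the per-site telescoping identity
  have hterm : ∀ k : ZMod (m + 4),
      Matrix.trace (FOmega (s k) *
        (List.ofFn fun j : Fin (m + 4 - 1) =>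
          MOmega (s (k + 1 + ((j : ℕ) : ZMod (m + 4))))).prod)
      = Matrix.trace (COm * (List.ofFn fun j : Fin (m + 4) =>
            MOmega (s (k + ((j : ℕ) : ZMod (m + 4))))).prod)
        - Matrix.trace (COm * (List.ofFn fun j : Fin (m + 4) =>
            MOmega (s (k + 1 + ((j : ℕ) : ZMod (m + 4))))).prod) := by
    intro k
    have h1 : ¬ (s (k - 1) = 1 ∧ s k = 1) := by
      have := hallow (k - 1)
      rw [sub_add_cancel] at this
      tauto
    have h2 : ¬ (s k = 1 ∧ s (k + 1) = 1) := by
      have := hallow k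
      tauto
    have hsand := Omega_sandwich _ _ _ h1 h2
    have hmain : Matrix.trace (FOmega (s k) *
        (List.ofFn fun j : Fin (m + 4 - 1) =>
          MOmega (s (k + 1 + ((j : ℕ) : ZMod (m + 4))))).prod)
        = Matrix.trace ((COm * MOmega (s k) - MOmega (s k) * COm) *
            (List.ofFn fun j : Fin (m + 4 - 1) =>
              MOmega (s (k + 1 + ((j : ℕ) : ZMod (m + 4))))).prod) := by
      conv_lhs => rw [hsplit k, List.prod_cons, List.prod_concat]
      conv_rhs => rw [hsplit k, List.prod_cons, List.prod_concat]
      exact Omega_trace_aux _ _ _ _ _ _ hsand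
    rw [hmain, Matrix.sub_mul, Matrix.trace_sub]
    congr 1
    · rw [mul_assoc, hPk1 k]
    · rw [Matrix.trace_mul_cycle, hPk2 k, Matrix.trace_mul_comm]
  rw [Finset.sum_congr rfl fun k _ => hterm k, Finset.sum_sub_distrib]
  have hshift : ∑ k : ZMod (m + 4),
      Matrix.trace (COm * (List.ofFn fun j : Fin (m + 4) =>
        MOmega (s (k + 1 + ((j : ℕ) : ZMod (m + 4))))).prod)
      = ∑ k : ZMod (m + 4),
      Matrix.trace (COm * (List.ofFn fun j : Fin (m + 4) =>
        MOmega (s (k + ((j : ℕ) : ZMod (m + 4))))).prod) := by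
    exact Fintype.sum_equiv (Equiv.addRight (1 : ZMod (m + 4))) _ _ fun k => rfl
  rw [hshift, sub_self]
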